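/- arXiv:1903.10796 — 2 statements merged into one kernel-verified Lean document; each statement's English description precedes it below -/
import Mathlib

section
/- Let G=(V,w,m) be a connected, locally finite weighted graph, let x₀ ≠ y₀ be vertices and ε > 0, and suppose d(x₀,y₀)·κ(x₀,y₀) ≤ ε. Then there exists an optimal transport plan ρ : B₁(x₀) × B₁(y₀) → [0,∞) such that Σ_{x ∈ B₁(x₀), y ∈ B₁(y₀), d(x,y) > d(x₀,y₀)} ρ(x,y) ≥ (q_min − ε)/2. -/
open scoped BigOperators

/-- A weighted graph `G = (V, w, m)`: a symmetric edge-weight function `w`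
vanishing on the diagonal, a positive vertex measure `m`, and local finiteness. -/
structure WeightedGraph (V : Type*) where
  w : V → V → ℝ
  m : V → ℝ
  w_symm : ∀ x y, w x y = w y x
  w_nonneg : ∀ x y, 0 ≤ w x y
  w_diag : ∀ x, w x x = 0
  m_pos : ∀ x, 0 < m x
  locFin : ∀ x, {y | 0 < w x y}.Finite

namespace WeightedGraph

variable {V : Type*} (G : WeightedGraph V)

/-- Adjacency: `x ~ y` iff `w x y > 0`. -/
def Adj (x y : V) : Prop := 0 < G.w x y

/-- The underlying simple graph. -/
def toSimpleGraph : SimpleGraph V where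
  Adj x y := 0 < G.w x y
  symm := by refine ⟨?_⟩; intro x y h; rw [G.w_symm y x]; exact h
  loopless := by refine ⟨?_⟩; intro x h; rw [G.w_diag] at h; exact lt_irrefl 0 h

/-- Combinatorial graph distance. -/
noncomputable def d (x y : V) : ℕ := G.toSimpleGraph.dist x y

/-- Transition rate `q(x,y) = w(x,y)/m(x)`. -/
noncomputable def q (x y : V) : ℝ := G.w x y / G.m x

/-- The graph Laplacian `Δf(x) = Σ_y q(x,y) (f(y) - f(x))`. -/
noncomputable def lap (f : V → ℝ) (x : V) : ℝ := ∑ᶠ y, G.q x y * (f y - f x)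

/-- The weighted vertex degree `Deg(x) = Σ_y q(x,y)`. -/
noncomputable def Deg (x : V) : ℝ := ∑ᶠ y, G.q x y

/-- The maximal weighted vertex degree. -/
noncomputable def DegMax : ℝ := ⨆ x, G.Deg x

/-- The minimal transition rate over edges, `q_min = inf_{x ~ y} q(x,y)`. -/
noncomputable def qMin : ℝ := sInf {r : ℝ | ∃ x y, G.Adj x y ∧ r = G.q x y}

/-- `‖∇f‖_∞ = sup_{x ~ y} (f x - f y)/d(x,y)`. -/
noncomputable def gradNorm (f : V → ℝ) : ℝ :=
  sSup {r : ℝ | ∃ x y, G.Adj x y ∧ r = (f x - f y) / (G.d x y : ℝ)}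

/-- The Ollivier curvature
`κ(x,y) = inf { ∇_{xy} Δf : ∇_{yx} f = 1, ‖∇f‖_∞ = 1 }`. -/
noncomputable def kappa (x y : V) : ℝ :=
  sInf {r : ℝ | ∃ f : V → ℝ,
    (f y - f x) / (G.d y x : ℝ) = 1 ∧ G.gradNorm f = 1 ∧
    r = (G.lap f x - G.lap f y) / (G.d x y : ℝ)}

/-- A function is harmonic if `Δf = 0`. -/
def Harmonic (f : V → ℝ) : Prop := ∀ x, G.lap f x = 0

/-- A transport plan between `x₀ ≠ y₀`: a nonnegative function supported on
`B₁(x₀) × B₁(y₀)` whose marginals on the spheres `S₁(x₀)`, `S₁(y₀)` are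
`q(x₀,·)` and `q(y₀,·)` respectively. -/
def IsTransportPlan (x₀ y₀ : V) (ρ : V → V → ℝ) : Prop :=
  (∀ x y, 0 ≤ ρ x y) ∧
  (∀ x y, ρ x y ≠ 0 → G.d x₀ x ≤ 1 ∧ G.d y₀ y ≤ 1) ∧
  (∀ x, G.d x₀ x = 1 → ∑ᶠ y, ρ x y = G.q x₀ x) ∧
  (∀ y, G.d y₀ y = 1 → ∑ᶠ x, ρ x y = G.q y₀ y)

/-- The transport functional `Σ_{x,y} ρ(x,y) (1 - d(x,y)/d(x₀,y₀))`. -/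
noncomputable def transportCost (x₀ y₀ : V) (ρ : V → V → ℝ) : ℝ :=
  ∑ᶠ x, ∑ᶠ y, ρ x y * (1 - (G.d x y : ℝ) / (G.d x₀ y₀ : ℝ))

/-- An optimal transport plan attains the supremum of the transport functional. -/
def IsOptimalTransportPlan (x₀ y₀ : V) (ρ : V → V → ℝ) : Prop :=
  G.IsTransportPlan x₀ y₀ ρ ∧
  ∀ ρ' : V → V → ℝ, G.IsTransportPlan x₀ y₀ ρ' →
    G.transportCost x₀ y₀ ρ' ≤ G.transportCost x₀ y₀ ρ

end WeightedGraph
namespace WeightedGraph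

variable {V : Type*} (G : WeightedGraph V)

lemma q_nonneg (x y : V) : 0 ≤ G.q x y := div_nonneg (G.w_nonneg x y) (G.m_pos x).le

lemma q_self (x : V) : G.q x x = 0 := by simp [q, G.w_diag]

lemma adj_of_q_ne_zero {x y : V} (h : G.q x y ≠ 0) : G.toSimpleGraph.Adj x y := by
  have hw : G.w x y ≠ 0 := fun hw => h (by simp [q, hw])
  exact lt_of_le_of_ne (G.w_nonneg x y) (Ne.symm hw)

lemma d_eq_one_of_adj {x y : V} (h : G.toSimpleGraph.Adj x y) : G.d x y = 1 :=
  SimpleGraph.dist_eq_one_iff_adj.mpr h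

lemma d_comm (x y : V) : G.d x y = G.d y x := SimpleGraph.dist_comm

lemma d_self (x : V) : G.d x x = 0 := by simp [d]

/-- The closed unit ball as a finset. -/
noncomputable def ball (x : V) : Finset V :=
  (Set.Finite.union (G.locFin x) (Set.finite_singleton x)).toFinset

lemma mem_ball (hconn : G.toSimpleGraph.Connected) {x z : V} :
    z ∈ G.ball x ↔ G.d x z ≤ 1 := by
  simp only [ball, Set.Finite.mem_toFinset, Set.mem_union, Set.mem_setOf_eq,
    Set.mem_singleton_iff]
  constructor
  · rintro (h | rfl)
    · exact le_of_eq (G.d_eq_one_of_adj h)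
    · simp [d_self]
  · intro h
    interval_cases hd : (G.d x z)
    · right
      exact (hconn.dist_eq_zero_iff.mp hd).symm
    · left
      exact SimpleGraph.dist_eq_one_iff_adj.mp hd

lemma self_mem_ball (x : V) : x ∈ G.ball x := by
  simp [ball, Set.Finite.mem_toFinset]

lemma mem_ball_of_d_eq_one {x z : V} (h : G.d x z = 1) : z ∈ G.ball x := by
  simp only [ball, Set.Finite.mem_toFinset, Set.mem_union, Set.mem_setOf_eq,
    Set.mem_singleton_iff]
  exact Or.inl (SimpleGraph.dist_eq_one_iff_adj.mp h)

lemma d_eq_one_of_mem_ball (hconn : G.toSimpleGraph.Connected) {x z : V}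
    (hz : z ∈ G.ball x) (hne : z ≠ x) : G.d x z = 1 := by
  have h1 := (G.mem_ball hconn).mp hz
  have h0 : G.d x z ≠ 0 := fun h => hne (hconn.dist_eq_zero_iff.mp h).symm
  omega

lemma lap_eq_sum (f : V → ℝ) (x : V) :
    G.lap f x = ∑ z ∈ G.ball x, G.q x z * (f z - f x) := by
  apply finsum_eq_sum_of_support_subset
  intro z hz
  have hz' : G.q x z * (f z - f x) ≠ 0 := hz
  have hq : G.q x z ≠ 0 := left_ne_zero_of_mul hz'
  exact Finset.mem_coe.mpr (G.mem_ball_of_d_eq_one (G.d_eq_one_of_adj (G.adj_of_q_ne_zero hq)))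

/-- gradNorm f = 1 implies f is 1-Lipschitz w.r.t. combinatorial distance. -/
lemma lipschitz_of_gradNorm (hconn : G.toSimpleGraph.Connected) {f : V → ℝ}
    (hg : G.gradNorm f = 1) (x y : V) : f x - f y ≤ (G.d x y : ℝ) := by
  set S := {r : ℝ | ∃ x y, G.Adj x y ∧ r = (f x - f y) / (G.d x y : ℝ)} with hS
  have hbdd : BddAbove S := by
    by_contra hb
    rw [gradNorm, csSup_of_not_bddAbove hb, Real.sSup_empty] at hg
    exact one_ne_zero hg.symm
  have hadj : ∀ a b : V, G.toSimpleGraph.Adj a b → f a - f b ≤ 1 := by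
    intro a b hab
    have hmem : (f a - f b) / (G.d a b : ℝ) ∈ S := ⟨a, b, hab, rfl⟩
    have := le_csSup hbdd hmem
    rw [← gradNorm, hg, G.d_eq_one_of_adj hab] at this
    simpa using this
  have hwalk : ∀ (a b : V) (p : G.toSimpleGraph.Walk a b), f a - f b ≤ (p.length : ℝ) := by
    intro a b p
    induction p with
    | nil => simp
    | cons h p ih =>
      rename_i u v w
      have h1 := hadj u v h
      have hl : ((SimpleGraph.Walk.cons h p).length : ℝ) = (p.length : ℝ) + 1 := by
        push_cast [SimpleGraph.Walk.length_cons]; ring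
      rw [hl]
      have : f u - f w = (f u - f v) + (f v - f w) := by ring
      rw [this]; linarith
  obtain ⟨p, hp⟩ := hconn.exists_walk_length_eq_dist x y
  have := hwalk x y p
  rwa [hp] at this

end WeightedGraph

namespace WeightedGraph

variable {V : Type*} (G : WeightedGraph V)

lemma row_sum (hconn : G.toSimpleGraph.Connected) (x₀ y₀ : V) {ρ : V → V → ℝ}
    (hρ : G.IsTransportPlan x₀ y₀ ρ)
    {x : V} (hx : G.d x₀ x = 1) : ∑ y ∈ G.ball y₀, ρ x y = G.q x₀ x := by
  rw [← hρ.2.2.1 x hx]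
  refine (finsum_eq_sum_of_support_subset (fun y => ρ x y) ?_).symm
  intro y hy
  exact Finset.mem_coe.mpr ((G.mem_ball hconn).mpr (hρ.2.1 x y hy).2)

lemma col_sum (hconn : G.toSimpleGraph.Connected) (x₀ y₀ : V) {ρ : V → V → ℝ}
    (hρ : G.IsTransportPlan x₀ y₀ ρ)
    {y : V} (hy : G.d y₀ y = 1) : ∑ x ∈ G.ball x₀, ρ x y = G.q y₀ y := by
  rw [← hρ.2.2.2 y hy]
  refine (finsum_eq_sum_of_support_subset (fun x => ρ x y) ?_).symm
  intro x hx
  exact Finset.mem_coe.mpr ((G.mem_ball hconn).mpr (hρ.2.1 x y hx).1)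

lemma cost_eq_sum (hconn : G.toSimpleGraph.Connected) (x₀ y₀ : V) {ρ : V → V → ℝ}
    (hsupp : ∀ x y, ρ x y ≠ 0 → G.d x₀ x ≤ 1 ∧ G.d y₀ y ≤ 1) :
    G.transportCost x₀ y₀ ρ =
      ∑ x ∈ G.ball x₀, ∑ y ∈ G.ball y₀, ρ x y * (1 - (G.d x y : ℝ) / (G.d x₀ y₀ : ℝ)) := by
  have hinner : ∀ x : V, (∑ᶠ y, ρ x y * (1 - (G.d x y : ℝ) / (G.d x₀ y₀ : ℝ))) =
      ∑ y ∈ G.ball y₀, ρ x y * (1 - (G.d x y : ℝ) / (G.d x₀ y₀ : ℝ)) := by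
    intro x
    refine finsum_eq_sum_of_support_subset _ ?_
    intro y hy
    have hρxy : ρ x y ≠ 0 := left_ne_zero_of_mul hy
    exact Finset.mem_coe.mpr ((G.mem_ball hconn).mpr (hsupp x y hρxy).2)
  rw [transportCost]
  have : (fun x => ∑ᶠ y, ρ x y * (1 - (G.d x y : ℝ) / (G.d x₀ y₀ : ℝ))) =
      fun x => ∑ y ∈ G.ball y₀, ρ x y * (1 - (G.d x y : ℝ) / (G.d x₀ y₀ : ℝ)) :=
    funext hinner
  rw [this]
  refine finsum_eq_sum_of_support_subset _ ?_
  intro x hx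
  have : ∃ y ∈ G.ball y₀, ρ x y * (1 - (G.d x y : ℝ) / (G.d x₀ y₀ : ℝ)) ≠ 0 := by
    by_contra hc
    push_neg at hc
    exact hx (Finset.sum_eq_zero hc)
  obtain ⟨y, _, hy⟩ := this
  have hρxy : ρ x y ≠ 0 := left_ne_zero_of_mul hy
  exact Finset.mem_coe.mpr ((G.mem_ball hconn).mpr (hsupp x y hρxy).1)

/-- The admissible set defining κ is nonempty: the distance function works. -/
lemma kappa_set_nonempty (hconn : G.toSimpleGraph.Connected) (x₀ y₀ : V) (hxy : x₀ ≠ y₀) :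
    ∃ f : V → ℝ, (f y₀ - f x₀) / (G.d y₀ x₀ : ℝ) = 1 ∧ G.gradNorm f = 1 := by
  classical
  set f : V → ℝ := fun z => (G.d x₀ z : ℝ) with hf
  have hd0 : 0 < G.d x₀ y₀ := hconn.pos_dist_of_ne hxy
  refine ⟨f, ?_, ?_⟩
  · have : G.d y₀ x₀ = G.d x₀ y₀ := G.d_comm y₀ x₀
    rw [hf]
    simp only [G.d_self x₀]
    rw [this]
    push_cast
    rw [sub_zero]
    exact div_self (by positivity)
  · rw [gradNorm]
    apply IsGreatest.csSup_eq
    constructor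
    · -- 1 is in the set
      have hne : G.d x₀ y₀ ≠ 0 := hd0.ne'
      obtain ⟨p, hp⟩ := SimpleGraph.exists_walk_of_dist_ne_zero hne
      cases p with
      | nil => exact absurd (SimpleGraph.Walk.length_nil ▸ hp).symm hne
      | @cons _ c _ h p' =>
        refine ⟨c, x₀, ?_, ?_⟩
        · exact h.symm
        · have hc1 : G.d x₀ c = 1 := G.d_eq_one_of_adj h
          have hc1' : G.d c x₀ = 1 := by rw [G.d_comm]; exact hc1
          simp [hf, hc1, hc1', G.d_self]
    · -- upper bound
      rintro r ⟨a, b, hab, rfl⟩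
      have hd : G.d a b = 1 := G.d_eq_one_of_adj hab
      have htri : G.d x₀ a ≤ G.d x₀ b + G.d b a := hconn.dist_triangle
      have hba : G.d b a = 1 := by rw [G.d_comm]; exact hd
      rw [hd]
      simp only [hf]
      push_cast
      rw [div_one]
      have : (G.d x₀ a : ℝ) ≤ (G.d x₀ b : ℝ) + 1 := by
        rw [hba] at htri; exact_mod_cast htri
      linarith

/-- Weak duality: the cost of any transport plan is at most the curvature. -/
lemma cost_le_kappa (hconn : G.toSimpleGraph.Connected) (x₀ y₀ : V) (hxy : x₀ ≠ y₀)
    {ρ : V → V → ℝ} (hρ : G.IsTransportPlan x₀ y₀ ρ) :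
    G.transportCost x₀ y₀ ρ ≤ G.kappa x₀ y₀ := by
  classical
  have hd0 : 0 < G.d x₀ y₀ := hconn.pos_dist_of_ne hxy
  have hd0R : (0 : ℝ) < (G.d x₀ y₀ : ℝ) := by exact_mod_cast hd0
  rw [kappa]
  apply le_csInf
  · obtain ⟨f, h1, h2⟩ := G.kappa_set_nonempty hconn x₀ y₀ hxy
    exact ⟨_, f, h1, h2, rfl⟩
  rintro r ⟨f, hf1, hf2, rfl⟩
  -- f is 1-Lipschitz and f y₀ - f x₀ = d₀
  have hlip : ∀ x y : V, f x - f y ≤ (G.d x y : ℝ) := G.lipschitz_of_gradNorm hconn hf2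
  have hfd : f y₀ - f x₀ = (G.d x₀ y₀ : ℝ) := by
    have hcomm : G.d y₀ x₀ = G.d x₀ y₀ := G.d_comm y₀ x₀
    rw [hcomm] at hf1
    field_simp at hf1
    linarith [hf1]
  set A := G.ball x₀ with hA
  set B := G.ball y₀ with hB
  -- rewrite both Laplacians as ball sums
  have hlapx : G.lap f x₀ = ∑ x ∈ A, (∑ y ∈ B, ρ x y) * (f x - f x₀) := by
    rw [G.lap_eq_sum f x₀]
    apply Finset.sum_congr rfl
    intro x hxA
    by_cases hx : x = x₀
    · subst hx; simp [G.q_self]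
    · rw [G.row_sum hconn x₀ y₀ hρ (G.d_eq_one_of_mem_ball hconn hxA hx)]
  have hlapy : G.lap f y₀ = ∑ y ∈ B, (∑ x ∈ A, ρ x y) * (f y - f y₀) := by
    rw [G.lap_eq_sum f y₀]
    apply Finset.sum_congr rfl
    intro y hyB
    by_cases hy : y = y₀
    · subst hy; simp [G.q_self]
    · rw [G.col_sum hconn x₀ y₀ hρ (G.d_eq_one_of_mem_ball hconn hyB hy)]
  have hkey : (G.d x₀ y₀ : ℝ) * G.transportCost x₀ y₀ ρ ≤ G.lap f x₀ - G.lap f y₀ := by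
    rw [G.cost_eq_sum hconn x₀ y₀ hρ.2.1, hlapx, hlapy]
    have hswap : ∑ y ∈ B, (∑ x ∈ A, ρ x y) * (f y - f y₀)
        = ∑ x ∈ A, ∑ y ∈ B, ρ x y * (f y - f y₀) := by
      rw [Finset.sum_comm]
      apply Finset.sum_congr rfl
      intro y _
      rw [Finset.sum_mul]
    rw [hswap]
    have hmulsum : ∀ x ∈ A, (∑ y ∈ B, ρ x y) * (f x - f x₀)
        = ∑ y ∈ B, ρ x y * (f x - f x₀) := by
      intro x _; rw [Finset.sum_mul]
    rw [Finset.sum_congr rfl hmulsum, ← Finset.sum_sub_distrib]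
    have : ∀ x ∈ A, (G.d x₀ y₀ : ℝ) * ∑ y ∈ B, ρ x y * (1 - (G.d x y : ℝ) / (G.d x₀ y₀ : ℝ))
        ≤ ∑ y ∈ B, ρ x y * (f x - f x₀) - ∑ y ∈ B, ρ x y * (f y - f y₀) := by
      intro x _
      rw [← Finset.sum_sub_distrib, Finset.mul_sum]
      apply Finset.sum_le_sum
      intro y _
      have hc : (G.d x₀ y₀ : ℝ) * (ρ x y * (1 - (G.d x y : ℝ) / (G.d x₀ y₀ : ℝ)))
          = ρ x y * ((G.d x₀ y₀ : ℝ) - (G.d x y : ℝ)) := by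
        field_simp
      rw [hc]
      have hterm : ρ x y * (f x - f x₀) - ρ x y * (f y - f y₀)
          = ρ x y * ((f y₀ - f x₀) - (f y - f x)) := by ring
      rw [hterm, hfd]
      have hyx : f y - f x ≤ (G.d x y : ℝ) := by
        have h := hlip y x
        rw [G.d_comm y x] at h
        exact h
      exact mul_le_mul_of_nonneg_left (by linarith) (hρ.1 x y)
    calc (G.d x₀ y₀ : ℝ) * ∑ x ∈ A, ∑ y ∈ B, ρ x y * (1 - (G.d x y : ℝ) / (G.d x₀ y₀ : ℝ))
        = ∑ x ∈ A, (G.d x₀ y₀ : ℝ) * ∑ y ∈ B, ρ x y * (1 - (G.d x y : ℝ) / (G.d x₀ y₀ : ℝ)) := by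
          rw [Finset.mul_sum]
      _ ≤ ∑ x ∈ A, (∑ y ∈ B, ρ x y * (f x - f x₀) - ∑ y ∈ B, ρ x y * (f y - f y₀)) :=
          Finset.sum_le_sum this
  rw [le_div_iff₀ hd0R, mul_comm]
  exact hkey

end WeightedGraph

namespace WeightedGraph

variable {V : Type*} (G : WeightedGraph V)

lemma exists_optimal_plan (hconn : G.toSimpleGraph.Connected) (x₀ y₀ : V) (hxy : x₀ ≠ y₀) :
    ∃ ρ : V → V → ℝ, G.IsTransportPlan x₀ y₀ ρ ∧
      ∀ ρ' : V → V → ℝ, G.IsTransportPlan x₀ y₀ ρ' →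
        G.transportCost x₀ y₀ ρ' ≤ G.transportCost x₀ y₀ ρ := by
  classical
  have hd0 : 0 < G.d x₀ y₀ := hconn.pos_dist_of_ne hxy
  have hd0R : (0 : ℝ) < (G.d x₀ y₀ : ℝ) := by exact_mod_cast hd0
  set A := G.ball x₀ with hA
  set B := G.ball y₀ with hB
  set c : V → V → ℝ := fun x y => 1 - (G.d x y : ℝ) / (G.d x₀ y₀ : ℝ) with hc
  set F : (V → V → ℝ) → ℝ := fun ρ => ∑ x ∈ A, ∑ y ∈ B, ρ x y * c x y with hF
  have hcost : ∀ ρ : V → V → ℝ, G.IsTransportPlan x₀ y₀ ρ → G.transportCost x₀ y₀ ρ = F ρ :=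
    fun ρ hρ => G.cost_eq_sum hconn x₀ y₀ hρ.2.1
  set M : ℝ := (∑ x ∈ A, G.q x₀ x) + (∑ y ∈ B, G.q y₀ y) with hM
  set Mf : V → V → ℝ := fun x y =>
    if x ∈ A ∧ y ∈ B ∧ ¬(x = x₀ ∧ y = y₀) then M else 0 with hMf
  set P0 : Set (V → V → ℝ) := {ρ | G.IsTransportPlan x₀ y₀ ρ ∧ ρ x₀ y₀ = 0} with hP0
  have hcont : ∀ x y : V, Continuous (fun ρ : V → V → ℝ => ρ x y) :=
    fun x y => (continuous_apply y).comp (continuous_apply x)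
  -- Bounds on plans in P0
  have hbound : ∀ ρ ∈ P0, ∀ x y : V, ρ x y ∈ Set.Icc (0 : ℝ) (Mf x y) := by
    rintro ρ ⟨hρ, hρ0⟩ x y
    refine ⟨hρ.1 x y, ?_⟩
    by_cases hcond : x ∈ A ∧ y ∈ B ∧ ¬(x = x₀ ∧ y = y₀)
    · rw [hMf]
      simp only [if_pos hcond]
      obtain ⟨hxA, hyB, hne⟩ := hcond
      have hsum1 : (0:ℝ) ≤ ∑ x ∈ A, G.q x₀ x := Finset.sum_nonneg fun i _ => G.q_nonneg x₀ i
      have hsum2 : (0:ℝ) ≤ ∑ y ∈ B, G.q y₀ y := Finset.sum_nonneg fun i _ => G.q_nonneg y₀ i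
      by_cases hx : x = x₀
      · have hy : y ≠ y₀ := fun h => hne ⟨hx, h⟩
        have hdy : G.d y₀ y = 1 := G.d_eq_one_of_mem_ball hconn hyB hy
        have hle : ρ x y ≤ ∑ x' ∈ A, ρ x' y :=
          Finset.single_le_sum (f := fun x' => ρ x' y) (fun i _ => hρ.1 i y) hxA
        rw [G.col_sum hconn x₀ y₀ hρ hdy] at hle
        have : G.q y₀ y ≤ ∑ y' ∈ B, G.q y₀ y' :=
          Finset.single_le_sum (f := fun y' => G.q y₀ y') (fun i _ => G.q_nonneg y₀ i) hyB
        rw [hM]; linarith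
      · have hdx : G.d x₀ x = 1 := G.d_eq_one_of_mem_ball hconn hxA hx
        have hle : ρ x y ≤ ∑ y' ∈ B, ρ x y' :=
          Finset.single_le_sum (f := fun y' => ρ x y') (fun i _ => hρ.1 x i) hyB
        rw [G.row_sum hconn x₀ y₀ hρ hdx] at hle
        have : G.q x₀ x ≤ ∑ x' ∈ A, G.q x₀ x' :=
          Finset.single_le_sum (f := fun x' => G.q x₀ x') (fun i _ => G.q_nonneg x₀ i) hxA
        rw [hM]; linarith
    · rw [hMf]
      simp only [if_neg hcond]
      push_neg at hcond
      by_cases hxA : x ∈ A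
      · by_cases hyB : y ∈ B
        · obtain ⟨h1, h2⟩ := hcond hxA hyB
          exact le_of_eq (by rw [h1, h2]; exact hρ0)
        · by_contra hne
          push_neg at hne
          have : ρ x y ≠ 0 := by intro h; rw [h] at hne; exact absurd le_rfl (not_le.mpr hne)
          exact hyB ((G.mem_ball hconn).mpr (hρ.2.1 x y this).2)
      · by_contra hne
        push_neg at hne
        have : ρ x y ≠ 0 := by intro h; rw [h] at hne; exact absurd le_rfl (not_le.mpr hne)
        exact hxA ((G.mem_ball hconn).mpr (hρ.2.1 x y this).1)
  -- P0 is contained in a compact box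
  set K : Set (V → V → ℝ) :=
    Set.univ.pi (fun x : V => Set.univ.pi (fun y : V => Set.Icc (0 : ℝ) (Mf x y))) with hK
  have hKcompact : IsCompact K :=
    isCompact_univ_pi fun x => isCompact_univ_pi fun y => isCompact_Icc
  have hsub : P0 ⊆ K := by
    intro ρ hρ
    rw [hK]
    intro x _
    intro y _
    exact hbound ρ hρ x y
  -- P0 is closed
  have hP0closed : IsClosed P0 := by
    have heq : P0 =
        (⋂ (x : V) (y : V), {ρ : V → V → ℝ | 0 ≤ ρ x y}) ∩
        ((⋂ (x : V) (y : V) (_ : ¬(x ∈ A ∧ y ∈ B)), {ρ : V → V → ℝ | ρ x y = 0}) ∩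
        ((⋂ (x : V) (_ : x ∈ A ∧ x ≠ x₀), {ρ : V → V → ℝ | ∑ y ∈ B, ρ x y = G.q x₀ x}) ∩
        ((⋂ (y : V) (_ : y ∈ B ∧ y ≠ y₀), {ρ : V → V → ℝ | ∑ x ∈ A, ρ x y = G.q y₀ y}) ∩
        {ρ : V → V → ℝ | ρ x₀ y₀ = 0}))) := by
      ext ρ
      simp only [Set.mem_inter_iff, Set.mem_iInter, Set.mem_setOf_eq, hP0]
      constructor
      · rintro ⟨hρ, hρ0⟩
        refine ⟨fun x y => hρ.1 x y, ?_, ?_, ?_, hρ0⟩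
        · intro x y hxy'
          by_contra hne
          exact hxy' ⟨(G.mem_ball hconn).mpr (hρ.2.1 x y hne).1,
            (G.mem_ball hconn).mpr (hρ.2.1 x y hne).2⟩
        · rintro x ⟨hxA, hxne⟩
          exact G.row_sum hconn x₀ y₀ hρ (G.d_eq_one_of_mem_ball hconn hxA hxne)
        · rintro y ⟨hyB, hyne⟩
          exact G.col_sum hconn x₀ y₀ hρ (G.d_eq_one_of_mem_ball hconn hyB hyne)
      · rintro ⟨h1, h2, h3, h4, h5⟩
        have hsupp : ∀ x y, ρ x y ≠ 0 → G.d x₀ x ≤ 1 ∧ G.d y₀ y ≤ 1 := by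
          intro x y hne
          by_contra hcon
          have : ¬(x ∈ A ∧ y ∈ B) := by
            intro ⟨ha, hb⟩
            exact hcon ⟨(G.mem_ball hconn).mp ha, (G.mem_ball hconn).mp hb⟩
          exact hne (h2 x y this)
        have hsuppB : ∀ x, Function.support (fun y => ρ x y) ⊆ ↑B := by
          intro x y hy
          by_contra hyB
          exact hy (h2 x y (fun h => hyB h.2))
        have hsuppA : ∀ y, Function.support (fun x => ρ x y) ⊆ ↑A := by
          intro y x hx
          by_contra hxA
          exact hx (h2 x y (fun h => hxA h.1))
        refine ⟨⟨h1, hsupp, ?_, ?_⟩, h5⟩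
        · intro x hx
          have hxA : x ∈ A := G.mem_ball_of_d_eq_one hx
          have hxne : x ≠ x₀ := by
            intro h; subst h; rw [G.d_self] at hx; exact one_ne_zero hx.symm
          rw [finsum_eq_sum_of_support_subset _ (hsuppB x)]
          exact h3 x ⟨hxA, hxne⟩
        · intro y hy
          have hyB : y ∈ B := G.mem_ball_of_d_eq_one hy
          have hyne : y ≠ y₀ := by
            intro h; subst h; rw [G.d_self] at hy; exact one_ne_zero hy.symm
          rw [finsum_eq_sum_of_support_subset _ (hsuppA y)]
          exact h4 y ⟨hyB, hyne⟩
    rw [heq]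
    refine IsClosed.inter ?_ (IsClosed.inter ?_ (IsClosed.inter ?_ (IsClosed.inter ?_ ?_)))
    · exact isClosed_iInter fun x => isClosed_iInter fun y =>
        isClosed_le continuous_const (hcont x y)
    · exact isClosed_iInter fun x => isClosed_iInter fun y => isClosed_iInter fun _ =>
        isClosed_eq (hcont x y) continuous_const
    · exact isClosed_iInter fun x => isClosed_iInter fun _ =>
        isClosed_eq (continuous_finset_sum _ fun y _ => hcont x y) continuous_const
    · exact isClosed_iInter fun y => isClosed_iInter fun _ =>
        isClosed_eq (continuous_finset_sum _ fun x _ => hcont x y) continuous_const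
    · exact isClosed_eq (hcont x₀ y₀) continuous_const
  have hP0compact : IsCompact P0 := hKcompact.of_isClosed_subset hP0closed hsub
  -- P0 is nonempty
  have hP0ne : P0.Nonempty := by
    set ρ₀ : V → V → ℝ := fun x y =>
      (if x = x₀ ∧ G.d y₀ y = 1 then G.q y₀ y else 0) +
      (if y = y₀ ∧ G.d x₀ x = 1 then G.q x₀ x else 0) with hρ₀
    have h00 : ρ₀ x₀ y₀ = 0 := by
      rw [hρ₀]
      simp [G.d_self]
    refine ⟨ρ₀, ⟨⟨?_, ?_, ?_, ?_⟩, h00⟩⟩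
    · intro x y
      refine add_nonneg ?_ ?_ <;> split <;> first | exact G.q_nonneg _ _ | exact le_rfl
    · intro x y hne
      have hne' : (if x = x₀ ∧ G.d y₀ y = 1 then G.q y₀ y else 0) +
          (if y = y₀ ∧ G.d x₀ x = 1 then G.q x₀ x else 0) ≠ 0 := by
        simpa [hρ₀] using hne
      by_cases h1 : x = x₀ ∧ G.d y₀ y = 1
      · exact ⟨by rw [h1.1, G.d_self]; exact Nat.zero_le 1, le_of_eq h1.2⟩
      · rw [if_neg h1, zero_add] at hne'
        by_cases h2 : y = y₀ ∧ G.d x₀ x = 1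
        · exact ⟨le_of_eq h2.2, by rw [h2.1, G.d_self]; exact Nat.zero_le 1⟩
        · rw [if_neg h2] at hne'; exact absurd rfl hne'
    · intro x hx
      have hxne : x ≠ x₀ := by
        intro h; subst h; rw [G.d_self] at hx; exact one_ne_zero hx.symm
      have : (fun y => ρ₀ x y) = fun y => if y = y₀ then G.q x₀ x else 0 := by
        funext y
        rw [hρ₀]
        simp only [hxne, false_and, if_false, zero_add]
        by_cases hy : y = y₀
        · simp [hy, hx]
        · simp [hy]
      rw [this]
      rw [finsum_eq_single _ y₀ (fun y hy => if_neg hy)]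
      simp
    · intro y hy
      have hyne : y ≠ y₀ := by
        intro h; subst h; rw [G.d_self] at hy; exact one_ne_zero hy.symm
      have : (fun x => ρ₀ x y) = fun x => if x = x₀ then G.q y₀ y else 0 := by
        funext x
        rw [hρ₀]
        simp only [hyne, false_and, if_false, add_zero]
        by_cases hx : x = x₀
        · simp [hx, hy]
        · simp [hx]
      rw [this]
      rw [finsum_eq_single _ x₀ (fun x hx => if_neg hx)]
      simp
  -- continuity of F
  have hFcont : Continuous F := by
    rw [hF]
    exact continuous_finset_sum _ fun x _ => continuous_finset_sum _ fun y _ =>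
      (hcont x y).mul continuous_const
  obtain ⟨ρs, hρsP0, hmax⟩ := hP0compact.exists_isMaxOn hP0ne hFcont.continuousOn
  refine ⟨ρs, hρsP0.1, ?_⟩
  intro ρ' hρ'
  -- zero out the (x₀, y₀) entry of ρ'
  set Z : V → V → ℝ := fun x y => if x = x₀ ∧ y = y₀ then 0 else ρ' x y with hZ
  have hZplan : G.IsTransportPlan x₀ y₀ Z := by
    refine ⟨?_, ?_, ?_, ?_⟩
    · intro x y; rw [hZ]; dsimp only; split
      · exact le_rfl
      · exact hρ'.1 x y
    · intro x y hne
      rw [hZ] at hne; dsimp only at hne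
      split at hne
      · exact absurd rfl hne
      · exact hρ'.2.1 x y hne
    · intro x hx
      have hxne : x ≠ x₀ := by
        intro h; subst h; rw [G.d_self] at hx; exact one_ne_zero hx.symm
      have : (fun y => Z x y) = fun y => ρ' x y := by
        funext y; rw [hZ]; simp [hxne]
      rw [this]
      exact hρ'.2.2.1 x hx
    · intro y hy
      have hyne : y ≠ y₀ := by
        intro h; subst h; rw [G.d_self] at hy; exact one_ne_zero hy.symm
      have : (fun x => Z x y) = fun x => ρ' x y := by
        funext x; rw [hZ]; simp [hyne]
      rw [this]
      exact hρ'.2.2.2 y hy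
  have hZ00 : Z x₀ y₀ = 0 := by rw [hZ]; simp
  have hZP0 : Z ∈ P0 := ⟨hZplan, hZ00⟩
  have hcxy0 : c x₀ y₀ = 0 := by
    rw [hc]; dsimp only
    rw [div_self hd0R.ne']
    ring
  have hFZ : F Z = F ρ' := by
    rw [hF]
    apply Finset.sum_congr rfl
    intro x _
    apply Finset.sum_congr rfl
    intro y _
    by_cases h : x = x₀ ∧ y = y₀
    · obtain ⟨h1, h2⟩ := h
      subst h1; subst h2
      rw [hZ]; dsimp only
      rw [if_pos ⟨rfl, rfl⟩, hcxy0]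
      ring
    · rw [hZ]; dsimp only
      rw [if_neg h]
  calc G.transportCost x₀ y₀ ρ' = F ρ' := hcost ρ' hρ'
    _ = F Z := hFZ.symm
    _ ≤ F ρs := hmax hZP0
    _ = G.transportCost x₀ y₀ ρs := (hcost ρs hρsP0.1).symm

end WeightedGraph

/-- If `d(x₀,y₀) κ(x₀,y₀) ≤ ε` for some `ε > 0`, then there is
an optimal transport plan `ρ` with
`Σ_{d(x,y) > d(x₀,y₀)} ρ(x,y) ≥ (q_min - ε)/2`. -/
theorem optimal_transport_plan_mass_over_longer_distance
    {V : Type*} [Countable V] (G : WeightedGraph V)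
    (hconn : G.toSimpleGraph.Connected)
    (x₀ y₀ : V) (hxy : x₀ ≠ y₀) (ε : ℝ) (hε : 0 < ε)
    (hκ : (G.d x₀ y₀ : ℝ) * G.kappa x₀ y₀ ≤ ε) :
    ∃ ρ : V → V → ℝ, G.IsOptimalTransportPlan x₀ y₀ ρ ∧
      (G.qMin - ε) / 2 ≤
        ∑ᶠ x, ∑ᶠ y, if G.d x₀ y₀ < G.d x y then ρ x y else 0 := by
  classical
  have hd0 : 0 < G.d x₀ y₀ := hconn.pos_dist_of_ne hxy
  have hd0R : (0 : ℝ) < (G.d x₀ y₀ : ℝ) := by exact_mod_cast hd0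
  obtain ⟨ρs, hρs, hopt⟩ := G.exists_optimal_plan hconn x₀ y₀ hxy
  obtain ⟨p, hp⟩ := hconn.exists_walk_length_eq_dist x₀ y₀
  cases p with
  | nil => exact absurd rfl hxy
  | @cons _ x₁ _ hadj p' =>
    rw [SimpleGraph.Walk.length_cons] at hp
    have hp' : p'.length + 1 = G.d x₀ y₀ := hp
    have hdx₁ : G.d x₀ x₁ = 1 := G.d_eq_one_of_adj hadj
    have hd1le : G.d x₁ y₀ ≤ p'.length := SimpleGraph.dist_le p'
    have htri : G.d x₀ y₀ ≤ G.d x₀ x₁ + G.d x₁ y₀ := hconn.dist_triangle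
    have hx₁d : G.d x₁ y₀ + 1 = G.d x₀ y₀ := by omega
    have hne01 : x₀ ≠ x₁ := by
      intro h; rw [← h] at hdx₁; rw [G.d_self] at hdx₁; exact one_ne_zero hdx₁.symm
    set A := G.ball x₀ with hA
    set B := G.ball y₀ with hB
    have hx₀A : x₀ ∈ A := G.self_mem_ball x₀
    have hx₁A : x₁ ∈ A := G.mem_ball_of_d_eq_one hdx₁
    have hy₀B : y₀ ∈ B := G.self_mem_ball y₀
    -- distance facts
    have hdist_x₁B : ∀ y ∈ B, G.d x₁ y ≤ G.d x₀ y₀ := by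
      intro y hy
      have h1 : G.d x₁ y ≤ G.d x₁ y₀ + G.d y₀ y := hconn.dist_triangle
      have h2 : G.d y₀ y ≤ 1 := (G.mem_ball hconn).mp hy
      omega
    have hdist_x₀B : ∀ y ∈ B, G.d x₀ y ≤ G.d x₀ y₀ + 1 := by
      intro y hy
      have h1 : G.d x₀ y ≤ G.d x₀ y₀ + G.d y₀ y := hconn.dist_triangle
      have h2 : G.d y₀ y ≤ 1 := (G.mem_ball hconn).mp hy
      omega
    have hdist_AB : ∀ x ∈ A, ∀ y ∈ B, G.d x y ≤ G.d x₀ y₀ + 2 := by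
      intro x hx y hy
      have h1 : G.d x y ≤ G.d x x₀ + G.d x₀ y := hconn.dist_triangle
      have h2 : G.d x₀ y ≤ G.d x₀ y₀ + 1 := hdist_x₀B y hy
      have h3 : G.d x x₀ ≤ 1 := by rw [G.d_comm]; exact (G.mem_ball hconn).mp hx
      omega
    have hdx₁y₀ne : G.d x₁ y₀ ≠ G.d x₀ y₀ := by omega
    -- the modification
    set T : ℝ := ∑ y ∈ B, (if G.d x₁ y = G.d x₀ y₀ then ρs x₁ y else 0) with hT
    have hT0 : 0 ≤ T := Finset.sum_nonneg fun y _ => by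
      split
      · exact hρs.1 x₁ y
      · exact le_rfl
    set ρh : V → V → ℝ := fun x y =>
      ρs x y + (if x = x₁ ∧ y = y₀ then T else 0)
        + (if x = x₀ ∧ G.d x₁ y = G.d x₀ y₀ then ρs x₁ y else 0)
        - (if x = x₁ ∧ G.d x₁ y = G.d x₀ y₀ then ρs x₁ y else 0) with hρh
    have hρh_eval : ∀ x y, ρh x y =
      ρs x y + (if x = x₁ ∧ y = y₀ then T else 0)
        + (if x = x₀ ∧ G.d x₁ y = G.d x₀ y₀ then ρs x₁ y else 0)
        - (if x = x₁ ∧ G.d x₁ y = G.d x₀ y₀ then ρs x₁ y else 0) := fun x y => rfl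
    have hρh_x₁far : ∀ y, G.d x₁ y = G.d x₀ y₀ → ρh x₁ y = 0 := by
      intro y hy
      have hyy₀ : y ≠ y₀ := by intro h; rw [h] at hy; exact hdx₁y₀ne hy
      rw [hρh_eval]
      rw [if_neg (fun h => hyy₀ h.2), if_neg (fun h => hne01 h.1.symm), if_pos ⟨rfl, hy⟩]
      ring
    have hρh_nonneg : ∀ x y, 0 ≤ ρh x y := by
      intro x y
      by_cases h3 : x = x₁ ∧ G.d x₁ y = G.d x₀ y₀
      · rw [h3.1, hρh_x₁far y h3.2]
      · rw [hρh_eval, if_neg h3, sub_zero]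
        have := hρs.1 x y
        split <;> split <;> first
          | linarith [hT0, hρs.1 x₁ y]
          | linarith [hT0]
          | linarith [hρs.1 x₁ y]
          | linarith
    -- ρh is a transport plan
    have hρh_supp : ∀ x y, ρh x y ≠ 0 → G.d x₀ x ≤ 1 ∧ G.d y₀ y ≤ 1 := by
      intro x y hne
      rw [hρh_eval] at hne
      by_cases h0 : ρs x y ≠ 0
      · exact hρs.2.1 x y h0
      push_neg at h0
      by_cases h1 : x = x₁ ∧ y = y₀
      · rw [h1.1, h1.2]
        constructor
        · exact le_of_eq hdx₁
        · rw [G.d_self]; exact Nat.zero_le 1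
      by_cases h2 : x = x₀ ∧ G.d x₁ y = G.d x₀ y₀
      · constructor
        · rw [h2.1, G.d_self]; exact Nat.zero_le 1
        · rw [h0, if_neg h1, if_pos h2] at hne
          have h4' : ¬(x = x₁ ∧ G.d x₁ y = G.d x₀ y₀) := by
            intro h; exact hne01 (h2.1.symm.trans h.1)
          rw [if_neg h4'] at hne
          simp only [zero_add, add_zero, sub_zero] at hne
          exact ((G.mem_ball hconn).mp ((G.mem_ball hconn).mpr
            (hρs.2.1 x₁ y hne).2)).trans le_rfl
      · rw [h0, if_neg h1, if_neg h2] at hne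
        exfalso
        apply hne
        by_cases h3 : x = x₁ ∧ G.d x₁ y = G.d x₀ y₀
        · rw [if_pos h3, ← h3.1, h0]; ring
        · rw [if_neg h3]; ring
    -- support of rows/columns
    have hρh_suppB : ∀ x, Function.support (fun y => ρh x y) ⊆ ↑B := by
      intro x y hy
      by_contra hyB
      apply hy
      show ρh x y = 0
      have h0 : ρs x y = 0 := by
        by_contra h
        exact hyB (Finset.mem_coe.mpr ((G.mem_ball hconn).mpr (hρs.2.1 x y h).2))
      have h0' : ρs x₁ y = 0 := by
        by_contra h
        exact hyB (Finset.mem_coe.mpr ((G.mem_ball hconn).mpr (hρs.2.1 x₁ y h).2))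
      have h1 : ¬(x = x₁ ∧ y = y₀) := fun h => hyB (h.2 ▸ Finset.mem_coe.mpr hy₀B)
      rw [hρh_eval, h0, if_neg h1]
      by_cases h2 : x = x₀ ∧ G.d x₁ y = G.d x₀ y₀
      · rw [if_pos h2, h0', if_neg (fun h => hne01 (h2.1.symm.trans h.1))]; ring
      · rw [if_neg h2]
        by_cases h3 : x = x₁ ∧ G.d x₁ y = G.d x₀ y₀
        · rw [if_pos h3, h0']; ring
        · rw [if_neg h3]; ring
    have hρh_suppA : ∀ y, Function.support (fun x => ρh x y) ⊆ ↑A := by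
      intro y x hx
      by_contra hxA
      apply hx
      show ρh x y = 0
      have hxx₀ : x ≠ x₀ := fun h => hxA (h ▸ Finset.mem_coe.mpr hx₀A)
      have hxx₁ : x ≠ x₁ := fun h => hxA (h ▸ Finset.mem_coe.mpr hx₁A)
      have h0 : ρs x y = 0 := by
        by_contra h
        exact hxA (Finset.mem_coe.mpr ((G.mem_ball hconn).mpr (hρs.2.1 x y h).1))
      rw [hρh_eval, h0, if_neg (fun h => hxx₁ h.1), if_neg (fun h => hxx₀ h.1),
        if_neg (fun h => hxx₁ h.1)]
      ring
    -- row and column sums of the modified plan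
    have hρh_rowsum : ∀ x, G.d x₀ x = 1 → ∑ y ∈ B, ρh x y = G.q x₀ x := by
      intro x hx
      have hxx₀ : x ≠ x₀ := by
        intro h; rw [h, G.d_self] at hx; exact one_ne_zero hx.symm
      have hsplit : ∑ y ∈ B, ρh x y
          = ∑ y ∈ B, ρs x y + ∑ y ∈ B, (if x = x₁ ∧ y = y₀ then T else 0)
            + ∑ y ∈ B, (if x = x₀ ∧ G.d x₁ y = G.d x₀ y₀ then ρs x₁ y else 0)
            - ∑ y ∈ B, (if x = x₁ ∧ G.d x₁ y = G.d x₀ y₀ then ρs x₁ y else 0) := by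
        rw [← Finset.sum_add_distrib, ← Finset.sum_add_distrib, ← Finset.sum_sub_distrib]
      rw [hsplit, G.row_sum hconn x₀ y₀ hρs hx]
      have e2 : ∑ y ∈ B, (if x = x₁ ∧ y = y₀ then T else 0) = if x = x₁ then T else 0 := by
        by_cases hx1 : x = x₁ <;> simp [hx1, hy₀B]
      have e3 : ∑ y ∈ B, (if x = x₀ ∧ G.d x₁ y = G.d x₀ y₀ then ρs x₁ y else 0) = 0 := by
        simp [hxx₀]
      have e4 : ∑ y ∈ B, (if x = x₁ ∧ G.d x₁ y = G.d x₀ y₀ then ρs x₁ y else 0)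
          = if x = x₁ then T else 0 := by
        by_cases hx1 : x = x₁ <;> simp [hx1, hT]
      rw [e2, e3, e4]; ring
    have hρh_colsum : ∀ y, G.d y₀ y = 1 → ∑ x ∈ A, ρh x y = G.q y₀ y := by
      intro y hy
      have hyy₀ : y ≠ y₀ := by
        intro h; rw [h, G.d_self] at hy; exact one_ne_zero hy.symm
      have hsplit : ∑ x ∈ A, ρh x y
          = ∑ x ∈ A, ρs x y + ∑ x ∈ A, (if x = x₁ ∧ y = y₀ then T else 0)
            + ∑ x ∈ A, (if x = x₀ ∧ G.d x₁ y = G.d x₀ y₀ then ρs x₁ y else 0)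
            - ∑ x ∈ A, (if x = x₁ ∧ G.d x₁ y = G.d x₀ y₀ then ρs x₁ y else 0) := by
        rw [← Finset.sum_add_distrib, ← Finset.sum_add_distrib, ← Finset.sum_sub_distrib]
      rw [hsplit, G.col_sum hconn x₀ y₀ hρs hy]
      have e2 : ∑ x ∈ A, (if x = x₁ ∧ y = y₀ then T else 0) = 0 := by simp [hyy₀]
      have e3 : ∑ x ∈ A, (if x = x₀ ∧ G.d x₁ y = G.d x₀ y₀ then ρs x₁ y else 0)
          = if G.d x₁ y = G.d x₀ y₀ then ρs x₁ y else 0 := by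
        by_cases hP : G.d x₁ y = G.d x₀ y₀ <;> simp [hP, hx₀A]
      have e4 : ∑ x ∈ A, (if x = x₁ ∧ G.d x₁ y = G.d x₀ y₀ then ρs x₁ y else 0)
          = if G.d x₁ y = G.d x₀ y₀ then ρs x₁ y else 0 := by
        by_cases hP : G.d x₁ y = G.d x₀ y₀ <;> simp [hP, hx₁A]
      rw [e2, e3, e4]; ring
    have hρh_plan : G.IsTransportPlan x₀ y₀ ρh := by
      refine ⟨hρh_nonneg, hρh_supp, ?_, ?_⟩
      · intro x hx
        rw [finsum_eq_sum_of_support_subset _ (hρh_suppB x)]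
        exact hρh_rowsum x hx
      · intro y hy
        rw [finsum_eq_sum_of_support_subset _ (hρh_suppA y)]
        exact hρh_colsum y hy
    -- cost comparison: the modified plan is still optimal
    set c : V → V → ℝ := fun x y => 1 - (G.d x y : ℝ) / (G.d x₀ y₀ : ℝ) with hc
    have hceval : ∀ x y, c x y = 1 - (G.d x y : ℝ) / (G.d x₀ y₀ : ℝ) := fun x y => rfl
    have hcost_s : G.transportCost x₀ y₀ ρs = ∑ x ∈ A, ∑ y ∈ B, ρs x y * c x y :=
      G.cost_eq_sum hconn x₀ y₀ hρs.2.1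
    have hcost_h : G.transportCost x₀ y₀ ρh = ∑ x ∈ A, ∑ y ∈ B, ρh x y * c x y :=
      G.cost_eq_sum hconn x₀ y₀ hρh_supp
    have hsplit : ∑ x ∈ A, ∑ y ∈ B, ρh x y * c x y
        = ∑ x ∈ A, ∑ y ∈ B, ρs x y * c x y
          + ∑ x ∈ A, ∑ y ∈ B, (if x = x₁ ∧ y = y₀ then T else 0) * c x y
          + ∑ x ∈ A, ∑ y ∈ B, (if x = x₀ ∧ G.d x₁ y = G.d x₀ y₀ then ρs x₁ y else 0) * c x y
          - ∑ x ∈ A, ∑ y ∈ B, (if x = x₁ ∧ G.d x₁ y = G.d x₀ y₀ then ρs x₁ y else 0) * c x y := by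
      rw [← Finset.sum_add_distrib, ← Finset.sum_add_distrib, ← Finset.sum_sub_distrib]
      refine Finset.sum_congr rfl fun x _ => ?_
      rw [← Finset.sum_add_distrib, ← Finset.sum_add_distrib, ← Finset.sum_sub_distrib]
      refine Finset.sum_congr rfl fun y _ => ?_
      rw [hρh_eval]; ring
    have E1 : ∑ x ∈ A, ∑ y ∈ B, (if x = x₁ ∧ y = y₀ then T else 0) * c x y
        = T * c x₁ y₀ := by
      have hrow : ∀ x ∈ A, ∑ y ∈ B, (if x = x₁ ∧ y = y₀ then T else 0) * c x y
          = if x = x₁ then T * c x₁ y₀ else 0 := by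
        intro x _
        by_cases hx1 : x = x₁
        · simp only [hx1, true_and, ite_mul, zero_mul]
          rw [Finset.sum_ite_eq' B y₀ (fun y => T * c x₁ y), if_pos hy₀B]
          simp
        · simp [hx1]
      rw [Finset.sum_congr rfl hrow, Finset.sum_ite_eq' A x₁ (fun _ => T * c x₁ y₀),
        if_pos hx₁A]
    have E3 : ∑ x ∈ A, ∑ y ∈ B, (if x = x₁ ∧ G.d x₁ y = G.d x₀ y₀ then ρs x₁ y else 0) * c x y
        = 0 := by
      refine Finset.sum_eq_zero fun x _ => Finset.sum_eq_zero fun y _ => ?_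
      by_cases hcond : x = x₁ ∧ G.d x₁ y = G.d x₀ y₀
      · rw [if_pos hcond, hcond.1]
        have : c x₁ y = 0 := by
          rw [hceval, hcond.2, div_self hd0R.ne']
          ring
        rw [this, mul_zero]
      · rw [if_neg hcond, zero_mul]
    have E2 : ∑ x ∈ A, ∑ y ∈ B, (if x = x₀ ∧ G.d x₁ y = G.d x₀ y₀ then ρs x₁ y else 0) * c x y
        ≥ T * (-1 / (G.d x₀ y₀ : ℝ)) := by
      have hrow : ∀ x ∈ A, ∑ y ∈ B, (if x = x₀ ∧ G.d x₁ y = G.d x₀ y₀ then ρs x₁ y else 0) * c x y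
          = if x = x₀ then ∑ y ∈ B, (if G.d x₁ y = G.d x₀ y₀ then ρs x₁ y * c x₀ y else 0)
            else 0 := by
        intro x _
        by_cases hx0 : x = x₀
        · simp [hx0, true_and, ite_mul, zero_mul]
        · simp [hx0]
      rw [Finset.sum_congr rfl hrow,
        Finset.sum_ite_eq' A x₀ (fun _ => ∑ y ∈ B, (if G.d x₁ y = G.d x₀ y₀
          then ρs x₁ y * c x₀ y else 0)), if_pos hx₀A, hT, Finset.sum_mul]
      apply Finset.sum_le_sum
      intro y hy
      by_cases hcond : G.d x₁ y = G.d x₀ y₀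
      · rw [if_pos hcond, if_pos hcond]
        have hcb : -1 / (G.d x₀ y₀ : ℝ) ≤ c x₀ y := by
          rw [hceval]
          have h1 : G.d x₀ y ≤ G.d x₀ y₀ + 1 := hdist_x₀B y hy
          have h1R : (G.d x₀ y : ℝ) ≤ (G.d x₀ y₀ : ℝ) + 1 := by exact_mod_cast h1
          have h2 : (G.d x₀ y : ℝ) / (G.d x₀ y₀ : ℝ)
              ≤ ((G.d x₀ y₀ : ℝ) + 1) / (G.d x₀ y₀ : ℝ) := by
            gcongr
          have h3 : ((G.d x₀ y₀ : ℝ) + 1) / (G.d x₀ y₀ : ℝ) = 1 + 1 / (G.d x₀ y₀ : ℝ) := by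
            field_simp
          have h4 : -1 / (G.d x₀ y₀ : ℝ) = -(1 / (G.d x₀ y₀ : ℝ)) := by ring
          linarith [h2, h3, h4]
        exact mul_le_mul_of_nonneg_left hcb (hρs.1 x₁ y)
      · rw [if_neg hcond, if_neg hcond, zero_mul]
    have hcx₁y₀ : c x₁ y₀ = 1 / (G.d x₀ y₀ : ℝ) := by
      rw [hceval]
      have hcast : (G.d x₁ y₀ : ℝ) = (G.d x₀ y₀ : ℝ) - 1 := by
        have h := hx₁d
        have : ((G.d x₁ y₀ : ℕ) : ℝ) + 1 = ((G.d x₀ y₀ : ℕ) : ℝ) := by exact_mod_cast h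
        linarith
      rw [hcast]
      field_simp
      ring
    have hhat_ge : G.transportCost x₀ y₀ ρs ≤ G.transportCost x₀ y₀ ρh := by
      rw [hcost_s, hcost_h, hsplit, E1, E3, hcx₁y₀]
      have h4 : T * (-1 / (G.d x₀ y₀ : ℝ)) = -(T * (1 / (G.d x₀ y₀ : ℝ))) := by ring
      linarith [E2, h4]
    have hρh_opt : G.IsOptimalTransportPlan x₀ y₀ ρh :=
      ⟨hρh_plan, fun ρ' h' => (hopt ρ' h').trans hhat_ge⟩
    -- the mass moved over longer distance
    set Bh : ℝ := ∑ x ∈ A, ∑ y ∈ B, (if G.d x₀ y₀ < G.d x y then ρh x y else 0) with hBh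
    have hsupp_ite : ∀ x y, (if G.d x₀ y₀ < G.d x y then ρh x y else 0) ≠ 0 → ρh x y ≠ 0 := by
      intro x y h
      by_cases hc' : G.d x₀ y₀ < G.d x y
      · rwa [if_pos hc'] at h
      · rw [if_neg hc'] at h; exact absurd rfl h
    have hgoal_eq : (∑ᶠ x, ∑ᶠ y, if G.d x₀ y₀ < G.d x y then ρh x y else 0) = Bh := by
      have hinner : ∀ x : V, (∑ᶠ y, if G.d x₀ y₀ < G.d x y then ρh x y else 0)
          = ∑ y ∈ B, (if G.d x₀ y₀ < G.d x y then ρh x y else 0) := by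
        intro x
        refine finsum_eq_sum_of_support_subset _ ?_
        intro y hy
        exact hρh_suppB x (Function.mem_support.mpr (hsupp_ite x y (Function.mem_support.mp hy)))
      have hfe : (fun x => ∑ᶠ y, if G.d x₀ y₀ < G.d x y then ρh x y else 0)
          = fun x => ∑ y ∈ B, (if G.d x₀ y₀ < G.d x y then ρh x y else 0) := funext hinner
      rw [hfe, hBh]
      refine finsum_eq_sum_of_support_subset _ ?_
      intro x hx
      by_contra hxA
      apply Function.mem_support.mp hx
      refine Finset.sum_eq_zero fun y _ => ?_
      have hz : ρh x y = 0 := by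
        by_contra h
        exact hxA (Finset.mem_coe.mpr ((G.mem_ball hconn).mpr (hρh_supp x y h).1))
      rw [hz]
      simp
    -- key numeric chain
    have hcostκ : G.transportCost x₀ y₀ ρh ≤ G.kappa x₀ y₀ :=
      G.cost_le_kappa hconn x₀ y₀ hxy hρh_plan
    have hkey1 : (G.d x₀ y₀ : ℝ) * G.transportCost x₀ y₀ ρh ≤ ε :=
      le_trans (mul_le_mul_of_nonneg_left hcostκ hd0R.le) hκ
    have hid : (G.d x₀ y₀ : ℝ) * G.transportCost x₀ y₀ ρh
        = ∑ x ∈ A, ∑ y ∈ B, ρh x y * ((G.d x₀ y₀ : ℝ) - (G.d x y : ℝ)) := by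
      rw [hcost_h, Finset.mul_sum]
      refine Finset.sum_congr rfl fun x _ => ?_
      rw [Finset.mul_sum]
      refine Finset.sum_congr rfl fun y _ => ?_
      rw [hceval]
      field_simp
    have hpt : ∀ x ∈ A, ∀ y ∈ B,
        (if x = x₁ then ρh x y else 0) - 2 * (if G.d x₀ y₀ < G.d x y then ρh x y else 0)
          ≤ ρh x y * ((G.d x₀ y₀ : ℝ) - (G.d x y : ℝ)) := by
      intro x hxA' y hyB'
      by_cases hx1 : x = x₁
      · subst hx1
        rw [if_pos rfl]
        have hle : G.d x y ≤ G.d x₀ y₀ := hdist_x₁B y hyB'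
        rw [if_neg (not_lt.mpr hle)]
        by_cases heq : G.d x y = G.d x₀ y₀
        · rw [hρh_x₁far y heq]
          simp
        · have h1 : G.d x y + 1 ≤ G.d x₀ y₀ := by omega
          have h1R : (1:ℝ) ≤ (G.d x₀ y₀ : ℝ) - (G.d x y : ℝ) := by
            have : ((G.d x y : ℝ) + 1) ≤ (G.d x₀ y₀ : ℝ) := by exact_mod_cast h1
            linarith
          have hmul := le_mul_of_one_le_right (hρh_nonneg x y) h1R
          linarith
      · rw [if_neg hx1]
        by_cases hlt : G.d x₀ y₀ < G.d x y
        · rw [if_pos hlt]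
          have h2 : G.d x y ≤ G.d x₀ y₀ + 2 := hdist_AB x hxA' y hyB'
          have h2R : (G.d x y : ℝ) ≤ (G.d x₀ y₀ : ℝ) + 2 := by exact_mod_cast h2
          have hmul := mul_le_mul_of_nonneg_left
            (by linarith : (-2:ℝ) ≤ (G.d x₀ y₀ : ℝ) - (G.d x y : ℝ)) (hρh_nonneg x y)
          linarith [hmul]
        · rw [if_neg hlt]
          have h3 : G.d x y ≤ G.d x₀ y₀ := not_lt.mp hlt
          have h3R : (G.d x y : ℝ) ≤ (G.d x₀ y₀ : ℝ) := by exact_mod_cast h3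
          have hmul := mul_nonneg (hρh_nonneg x y)
            (by linarith : (0:ℝ) ≤ (G.d x₀ y₀ : ℝ) - (G.d x y : ℝ))
          linarith
    have hrow_x₁ : ∑ y ∈ B, ρh x₁ y = G.q x₀ x₁ := hρh_rowsum x₁ hdx₁
    have hsum_lb : G.q x₀ x₁ - 2 * Bh
        ≤ ∑ x ∈ A, ∑ y ∈ B, ρh x y * ((G.d x₀ y₀ : ℝ) - (G.d x y : ℝ)) := by
      have step : ∑ x ∈ A, ∑ y ∈ B,
          ((if x = x₁ then ρh x y else 0) - 2 * (if G.d x₀ y₀ < G.d x y then ρh x y else 0))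
          ≤ ∑ x ∈ A, ∑ y ∈ B, ρh x y * ((G.d x₀ y₀ : ℝ) - (G.d x y : ℝ)) :=
        Finset.sum_le_sum fun x hx => Finset.sum_le_sum fun y hy => hpt x hx y hy
      have lhs_eq : ∑ x ∈ A, ∑ y ∈ B,
          ((if x = x₁ then ρh x y else 0) - 2 * (if G.d x₀ y₀ < G.d x y then ρh x y else 0))
          = G.q x₀ x₁ - 2 * Bh := by
        have hrowwise : ∀ x ∈ A, ∑ y ∈ B,
            ((if x = x₁ then ρh x y else 0) - 2 * (if G.d x₀ y₀ < G.d x y then ρh x y else 0))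
            = (∑ y ∈ B, (if x = x₁ then ρh x y else 0))
              - 2 * ∑ y ∈ B, (if G.d x₀ y₀ < G.d x y then ρh x y else 0) := by
          intro x _
          rw [Finset.sum_sub_distrib, Finset.mul_sum]
        rw [Finset.sum_congr rfl hrowwise, Finset.sum_sub_distrib]
        have e1 : ∑ x ∈ A, ∑ y ∈ B, (if x = x₁ then ρh x y else 0) = G.q x₀ x₁ := by
          have hx' : ∀ x ∈ A, ∑ y ∈ B, (if x = x₁ then ρh x y else 0)
              = if x = x₁ then ∑ y ∈ B, ρh x₁ y else 0 := by
            intro x _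
            by_cases hx1 : x = x₁ <;> simp [hx1]
          rw [Finset.sum_congr rfl hx',
            Finset.sum_ite_eq' A x₁ (fun _ => ∑ y ∈ B, ρh x₁ y), if_pos hx₁A, hrow_x₁]
        have e2 : ∑ x ∈ A, 2 * ∑ y ∈ B, (if G.d x₀ y₀ < G.d x y then ρh x y else 0)
            = 2 * Bh := by
          rw [hBh, Finset.mul_sum]
        rw [e1, e2]
      linarith [step, lhs_eq]
    have hqmin : G.qMin ≤ G.q x₀ x₁ := by
      apply csInf_le
      · exact ⟨0, by rintro r ⟨a, b, hab, rfl⟩; exact G.q_nonneg a b⟩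
      · exact ⟨x₀, x₁, hadj, rfl⟩
    refine ⟨ρh, hρh_opt, ?_⟩
    rw [hgoal_eq]
    linarith [hkey1, hid, hsum_lb, hqmin]
end

section
/- Let G=(V,w,m) be a connected, locally finite weighted graph, let f : V → ℝ satisfy ‖∇f‖_∞ = 1, let ε > 0 and let x₀ ≠ y₀ be vertices with f(x₀) − f(y₀) ≥ d(x₀,y₀) − ε. Define g₀ : B₁(x₀) → ℝ by g₀(w) := min{ f(w), f(x₀) − d(x₀,y₀) + d(y₀,w) } and define g : V → ℝ by g(z) := max_{w ∈ B₁(x₀)} (g₀(w) − d(w,z)). Then: (i) g is 1-Lipschitz with respect to d; (ii) g ≤ f on V; (iii) g(w) = g₀(w) ≥ f(w) − ε for all w ∈ B₁(x₀); and (iv) g(y₀) = g(x₀) − d(x₀,y₀) = f(x₀) − d(x₀,y₀). -/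
open scoped BigOperators

private lemma grad_lip {V : Type*} (G : WeightedGraph V)
    (hconn : G.toSimpleGraph.Connected)
    (f : V → ℝ) (hf : G.gradNorm f = 1) :
    ∀ a b : V, f a - f b ≤ (G.d a b : ℝ) := by
  have hbdd : BddAbove {r : ℝ | ∃ x y, G.Adj x y ∧ r = (f x - f y) / (G.d x y : ℝ)} := by
    by_contra h
    rw [WeightedGraph.gradNorm, Real.sSup_of_not_bddAbove h] at hf
    norm_num at hf
  have step : ∀ x y : V, G.toSimpleGraph.Adj x y → f x - f y ≤ 1 := by
    intro x y hxy
    have hd : G.d x y = 1 := (SimpleGraph.dist_eq_one_iff_adj).2 hxy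
    have hmem : (f x - f y) / (G.d x y : ℝ) ∈
        {r : ℝ | ∃ x y, G.Adj x y ∧ r = (f x - f y) / (G.d x y : ℝ)} := ⟨x, y, hxy, rfl⟩
    have := le_csSup hbdd hmem
    rw [WeightedGraph.gradNorm] at hf
    rw [hf, hd] at this
    simpa using this
  have walk : ∀ (a b : V) (p : G.toSimpleGraph.Walk a b), f a - f b ≤ (p.length : ℝ) := by
    intro a b p
    induction p with
    | nil => simp
    | cons h p ih =>
        rename_i u v w
        have h1 := step u v h
        simp only [SimpleGraph.Walk.length_cons]
        push_cast
        linarith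
  intro a b
  obtain ⟨p, hp⟩ := (hconn a b).exists_walk_length_eq_dist
  have := walk a b p
  rw [hp] at this
  exact this

/-- Let `f` have `‖∇f‖_∞ = 1`, `ε > 0` and `x₀ ≠ y₀` with
`f(x₀) - f(y₀) ≥ d(x₀,y₀) - ε`. With
`g₀(w) = min (f w) (f x₀ - d(x₀,y₀) + d(y₀,w))` on `B₁(x₀)` and
`g(z) = max_{w ∈ B₁(x₀)} (g₀ w - d(w,z))`, we have:
(i) `g` is 1-Lipschitz w.r.t. `d`; (ii) `g ≤ f`;
(iii) `g = g₀ ≥ f - ε` on `B₁(x₀)`;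
(iv) `g(y₀) = g(x₀) - d(x₀,y₀) = f(x₀) - d(x₀,y₀)`. -/
theorem lipschitz_extension_properties
    {V : Type*} [Countable V] (G : WeightedGraph V)
    (hconn : G.toSimpleGraph.Connected)
    (f : V → ℝ) (hf : G.gradNorm f = 1) (ε : ℝ) (hε : 0 < ε)
    (x₀ y₀ : V) (hxy : x₀ ≠ y₀)
    (hfd : (G.d x₀ y₀ : ℝ) - ε ≤ f x₀ - f y₀)
    (g₀ : V → ℝ)
    (hg₀ : ∀ u, G.d x₀ u ≤ 1 →
      g₀ u = min (f u) (f x₀ - (G.d x₀ y₀ : ℝ) + (G.d y₀ u : ℝ)))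
    (g : V → ℝ)
    (hg : ∀ z, g z = sSup {r : ℝ | ∃ u, G.d x₀ u ≤ 1 ∧ r = g₀ u - (G.d u z : ℝ)}) :
    (∀ a b : V, |g a - g b| ≤ (G.d a b : ℝ)) ∧
    (∀ z, g z ≤ f z) ∧
    (∀ u, G.d x₀ u ≤ 1 → g u = g₀ u ∧ f u - ε ≤ g u) ∧
    (g y₀ = g x₀ - (G.d x₀ y₀ : ℝ) ∧ g y₀ = f x₀ - (G.d x₀ y₀ : ℝ)) := by
  classical
  set D : ℝ := (G.d x₀ y₀ : ℝ) with hD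
  have hlip : ∀ a b : V, f a - f b ≤ (G.d a b : ℝ) := grad_lip G hconn f hf
  have dtri : ∀ a b c : V, (G.d a c : ℝ) ≤ (G.d a b : ℝ) + (G.d b c : ℝ) := by
    intro a b c
    have := hconn.dist_triangle (u := a) (v := b) (w := c)
    exact_mod_cast this
  have dsymm : ∀ a b : V, G.d a b = G.d b a := fun a b => SimpleGraph.dist_comm
  have dself : ∀ a : V, G.d a a = 0 := fun a => SimpleGraph.dist_self
  -- g₀ ≤ f on B₁
  have hg₀f : ∀ u, G.d x₀ u ≤ 1 → g₀ u ≤ f u := by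
    intro u hu; rw [hg₀ u hu]; exact min_le_left _ _
  have hg₀r : ∀ u, G.d x₀ u ≤ 1 → g₀ u ≤ f x₀ - D + (G.d y₀ u : ℝ) := by
    intro u hu; rw [hg₀ u hu]; exact min_le_right _ _
  -- g₀ is Lipschitz on B₁
  have hg₀lip : ∀ u u', G.d x₀ u ≤ 1 → G.d x₀ u' ≤ 1 →
      g₀ u - g₀ u' ≤ (G.d u u' : ℝ) := by
    intro u u' hu hu'
    rw [hg₀ u hu, hg₀ u' hu']
    have h1 : f u ≤ f u' + (G.d u u' : ℝ) := by have := hlip u u'; linarith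
    have h2 : (G.d y₀ u : ℝ) ≤ (G.d y₀ u' : ℝ) + (G.d u' u : ℝ) := dtri y₀ u' u
    have hsym : (G.d u' u : ℝ) = (G.d u u' : ℝ) := by rw [dsymm]
    have := min_le_left (f u) (f x₀ - D + (G.d y₀ u : ℝ))
    have := min_le_right (f u) (f x₀ - D + (G.d y₀ u : ℝ))
    have hL := min_le_left (f u) (f x₀ - D + (G.d y₀ u : ℝ))
    have hR := min_le_right (f u) (f x₀ - D + (G.d y₀ u : ℝ))
    rw [hsym] at h2
    rcases le_total (f u') (f x₀ - D + (G.d y₀ u' : ℝ)) with h | h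
    · rw [min_eq_left h]; linarith
    · rw [min_eq_right h]; linarith
  -- the set defining g
  set S : V → Set ℝ := fun z => {r : ℝ | ∃ u, G.d x₀ u ≤ 1 ∧ r = g₀ u - (G.d u z : ℝ)}
    with hS
  have hx₀B : G.d x₀ x₀ ≤ 1 := by rw [dself]; norm_num
  have hne : ∀ z, (S z).Nonempty := fun z => ⟨g₀ x₀ - (G.d x₀ z : ℝ), x₀, hx₀B, rfl⟩
  have hbdd : ∀ z, BddAbove (S z) := by
    intro z
    refine ⟨f z, ?_⟩
    rintro r ⟨u, hu, rfl⟩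
    have := hlip u z
    have := hg₀f u hu
    linarith
  have hgz : ∀ z, g z = sSup (S z) := hg
  -- (ii)
  have hii : ∀ z, g z ≤ f z := by
    intro z
    rw [hgz z]
    apply csSup_le (hne z)
    rintro r ⟨u, hu, rfl⟩
    have := hlip u z
    have := hg₀f u hu
    linarith
  -- (iii)
  have hiii : ∀ u, G.d x₀ u ≤ 1 → g u = g₀ u ∧ f u - ε ≤ g u := by
    intro u hu
    have hle : g u ≤ g₀ u := by
      rw [hgz u]
      apply csSup_le (hne u)
      rintro r ⟨u', hu', rfl⟩
      have := hg₀lip u' u hu' hu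
      linarith
    have hge : g₀ u ≤ g u := by
      rw [hgz u]
      have : g₀ u - (G.d u u : ℝ) ∈ S u := ⟨u, hu, rfl⟩
      have h2 := le_csSup (hbdd u) this
      rw [dself u] at h2
      simpa using h2
    have heq : g u = g₀ u := le_antisymm hle hge
    refine ⟨heq, ?_⟩
    rw [heq, hg₀ u hu]
    have h1 : f u - f y₀ ≤ (G.d y₀ u : ℝ) := by
      have := hlip u y₀; rw [dsymm u y₀] at this; exact_mod_cast this
    have h2 : f u - ε ≤ f x₀ - D + (G.d y₀ u : ℝ) := by
      have : D - ε ≤ f x₀ - f y₀ := hfd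
      linarith
    exact le_min (by linarith) h2
  -- g x₀ = f x₀
  have hgx₀ : g x₀ = f x₀ := by
    have := (hiii x₀ hx₀B).1
    rw [this, hg₀ x₀ hx₀B]
    have hdyx : (G.d y₀ x₀ : ℝ) = D := by rw [hD]; norm_cast; exact dsymm y₀ x₀
    rw [hdyx]
    simp
  -- (iv): g y₀ = f x₀ - D
  have hgy₀ : g y₀ = f x₀ - D := by
    rw [hgz y₀]
    apply le_antisymm
    · apply csSup_le (hne y₀)
      rintro r ⟨u, hu, rfl⟩
      have h1 := hg₀r u hu
      have h2 : (G.d y₀ u : ℝ) = (G.d u y₀ : ℝ) := by norm_cast; exact dsymm y₀ u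
      linarith
    · have hmem : g₀ x₀ - (G.d x₀ y₀ : ℝ) ∈ S y₀ := ⟨x₀, hx₀B, rfl⟩
      have h2 := le_csSup (hbdd y₀) hmem
      have h3 : g₀ x₀ = f x₀ := by
        rw [hg₀ x₀ hx₀B]
        have hdyx : (G.d y₀ x₀ : ℝ) = D := by rw [hD]; norm_cast; exact dsymm y₀ x₀
        rw [hdyx]; simp
      rw [h3] at h2
      exact h2
  -- (i)
  have hi : ∀ a b : V, |g a - g b| ≤ (G.d a b : ℝ) := by
    have key : ∀ a b : V, g a - g b ≤ (G.d a b : ℝ) := by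
      intro a b
      rw [hgz a]
      have : sSup (S a) ≤ g b + (G.d a b : ℝ) := by
        apply csSup_le (hne a)
        rintro r ⟨u, hu, rfl⟩
        have h1 : (G.d u b : ℝ) ≤ (G.d u a : ℝ) + (G.d a b : ℝ) := dtri u a b
        have h2 : g₀ u - (G.d u b : ℝ) ≤ g b := by
          rw [hgz b]
          exact le_csSup (hbdd b) ⟨u, hu, rfl⟩
        linarith
      linarith
    intro a b
    rw [abs_sub_le_iff]
    refine ⟨key a b, ?_⟩
    have := key b a
    have hd : (G.d b a : ℝ) = (G.d a b : ℝ) := by norm_cast; exact dsymm b a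
    linarith
  exact ⟨hi, hii, hiii, by rw [hgy₀, hgx₀]; constructor <;> ring⟩
end
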